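/- Let (I^{(1)},…,I^{(r)}) be a nesting of m-primary ideals of R contained in m that has trivial negative tangents (TNT). Suppose there exist 1 ≤ j ≤ r and k ≥ 1 with I^{(j)} ⊋ m^k ⊋ I^{(j+1)}, where by convention I^{(r+1)} = 0. Let p = (I^{(1)},…,I^{(j)}, m^k, I^{(j+1)},…,I^{(r)}) be the (r+1)-nesting obtained by inserting m^k after position j. Then there is a ℂ-linear isomorphism T^{<0}(p) ≅ T^{<0}(I^{(1)},…,I^{(r)}) ⊕ Hom_R(m^k/I^{(j+1)}, I^{(j)}/m^k). -/

import Mathlib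

open MvPolynomial

noncomputable section
set_option synthInstance.maxHeartbeats 1000000
set_option maxHeartbeats 1000000

/-- `R n = ℂ[x_1, …, x_n]`. -/
abbrev R (n : ℕ) : Type := MvPolynomial (Fin n) ℂ

/-- `m = (x_1, …, x_n)`, the ideal generated by the variables. -/
def mId (n : ℕ) : Ideal (R n) := Ideal.span (Set.range MvPolynomial.X)

open Classical in
/-- The canonical projection `R/p → R/q` (for `p ≤ q`); defined as `0` if `p ≰ q`. -/
def proj {n : ℕ} (p q : Ideal (R n)) : (R n ⧸ p) →ₗ[R n] (R n ⧸ q) :=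
  if h : p ≤ q then Submodule.mapQ p q LinearMap.id (fun _ hx => h hx) else 0

/-- The ambient space of candidate tangent tuples for an `r`-nesting. -/
abbrev TanCar (n r : ℕ) (I : Fin r → Ideal (R n)) : Type :=
  Π i : Fin r, ↥(I i) →ₗ[R n] (R n ⧸ I i)

/-- The tangent space `T(I^{(1)}, …, I^{(r)})`: tuples `(φ_1, …, φ_r)` with
`φ_i ∈ Hom_R(I^{(i)}, R/I^{(i)})` such that for consecutive indices and
`f ∈ I^{(i+1)}`, `φ_i(f)` is the image of `φ_{i+1}(f)` under `R/I^{(i+1)} → R/I^{(i)}`. -/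
def nestT {n r : ℕ} (I : Fin r → Ideal (R n)) : Submodule ℂ (TanCar n r I) where
  carrier := { φ | ∀ (i j : Fin r), (j : ℕ) = (i : ℕ) + 1 →
      ∀ (f : R n) (hfi : f ∈ I i) (hfj : f ∈ I j),
        φ i ⟨f, hfi⟩ = proj (I j) (I i) (φ j ⟨f, hfj⟩) }
  add_mem' := by
    intro a b ha hb i j hij f hfi hfj
    simp only [Pi.add_apply, LinearMap.add_apply, map_add,
      ha i j hij f hfi hfj, hb i j hij f hfi hfj]
  zero_mem' := by
    intro i j hij f hfi hfj
    simp
  smul_mem' := by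
    intro c a ha i j hij f hfi hfj
    simp only [Pi.smul_apply, LinearMap.smul_apply, LinearMap.map_smul_of_tower,
      ha i j hij f hfi hfj]

/-- The non-negative part `T^{≥0}`: tuples with `φ_i(I^{(i)} ∩ m^j) ⊆ (m^j + I^{(i)})/I^{(i)}`
for all `i` and all `j ≥ 0`. -/
def nestTnn {n r : ℕ} (I : Fin r → Ideal (R n)) : Submodule ℂ (TanCar n r I) where
  carrier := { φ | ∀ (i : Fin r) (j : ℕ) (f : R n) (hfi : f ∈ I i), f ∈ mId n ^ j →
      φ i ⟨f, hfi⟩ ∈ Submodule.map (Ideal.Quotient.mkₐ ℂ (I i)).toLinearMap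
        ((mId n ^ j).restrictScalars ℂ) }
  add_mem' := by
    intro a b ha hb i j f hfi hfm
    exact Submodule.add_mem _ (ha i j f hfi hfm) (hb i j f hfi hfm)
  zero_mem' := by
    intro i j f hfi hfm
    exact Submodule.zero_mem _
  smul_mem' := by
    intro c a ha i j f hfi hfm
    exact Submodule.smul_mem _ c (ha i j f hfi hfm)

instance nestT.instAddCommGroup {n r : ℕ} (I : Fin r → Ideal (R n)) : AddCommGroup ↥(nestT I) :=
  @Submodule.addCommGroup ℂ (TanCar n r I) _ _ _ (nestT I)

/-- The negative tangent space `T^{<0} = T / T^{≥0}`. -/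
abbrev nestTneg {n r : ℕ} (I : Fin r → Ideal (R n)) : Type :=
  ↥(nestT I) ⧸ Submodule.comap (nestT I).subtype (nestTnn I)

/-- The tangent vector `π ∘ ∂/∂x_l` restricted to `I`. -/
def derivT {n : ℕ} (I : Ideal (R n)) (l : Fin n) : ↥I →ₗ[R n] (R n ⧸ I) where
  toFun f := Ideal.Quotient.mk I (pderiv l (f : R n))
  map_add' f g := by simp
  map_smul' r f := by
    obtain ⟨f, hf⟩ := f
    show Ideal.Quotient.mk _ (pderiv l (r • f)) = r • Ideal.Quotient.mk _ (pderiv l f)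
    rw [smul_eq_mul, pderiv_mul, map_add, map_mul, Ideal.Quotient.eq_zero_iff_mem.2 hf,
      mul_zero, zero_add]
    show Submodule.Quotient.mk (r * pderiv l f) = r • Submodule.Quotient.mk (pderiv l f)
    rw [← Submodule.Quotient.mk_smul, smul_eq_mul]

/-- The ideal `I^{(j+1)}` following position `j` in an `r`-nesting, with the convention
`I^{(r+1)} = 0`. -/
def Inext {n r : ℕ} (I : Fin r → Ideal (R n)) (j : Fin r) : Ideal (R n) :=
  if h : (j : ℕ) + 1 < r then I ⟨(j : ℕ) + 1, h⟩ else ⊥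


/-! ### Auxiliary lemmas for the sandwich theorem -/

section SandwichAux

lemma mem_nestT_iff {n r : ℕ} {I : Fin r → Ideal (R n)} {φ : TanCar n r I} :
    φ ∈ nestT I ↔ ∀ (i j : Fin r), (j : ℕ) = (i : ℕ) + 1 →
      ∀ (f : R n) (hfi : f ∈ I i) (hfj : f ∈ I j),
        φ i ⟨f, hfi⟩ = proj (I j) (I i) (φ j ⟨f, hfj⟩) := Iff.rfl

lemma mem_nestTnn_iff {n r : ℕ} {I : Fin r → Ideal (R n)} {φ : TanCar n r I} :
    φ ∈ nestTnn I ↔ ∀ (i : Fin r) (j : ℕ) (f : R n) (hfi : f ∈ I i), f ∈ mId n ^ j →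
      φ i ⟨f, hfi⟩ ∈ Submodule.map (Ideal.Quotient.mkₐ ℂ (I i)).toLinearMap
        ((mId n ^ j).restrictScalars ℂ) := Iff.rfl

lemma proj_mk {n : ℕ} {p q : Ideal (R n)} (h : p ≤ q) (a : R n) :
    proj p q (Submodule.Quotient.mk a) = Submodule.Quotient.mk a := by
  rw [proj, dif_pos h, Submodule.mapQ_apply]; rfl

lemma proj_comp {n : ℕ} {p q s : Ideal (R n)} (hpq : p ≤ q) (hqs : q ≤ s) (x : R n ⧸ p) :
    proj q s (proj p q x) = proj p s x := by
  obtain ⟨a, rfl⟩ := Submodule.Quotient.mk_surjective _ x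
  rw [proj_mk hpq, proj_mk hqs, proj_mk (hpq.trans hqs)]

lemma proj_id {n : ℕ} {p : Ideal (R n)} (x : R n ⧸ p) : proj p p x = x := by
  obtain ⟨a, rfl⟩ := Submodule.Quotient.mk_surjective _ x
  rw [proj_mk le_rfl]

lemma proj_csmul {n : ℕ} (p q : Ideal (R n)) (c : ℂ) (x : R n ⧸ p) :
    proj p q (c • x) = c • proj p q x := by
  by_cases h : p ≤ q
  · obtain ⟨a, rfl⟩ := Submodule.Quotient.mk_surjective _ x
    rw [← Submodule.Quotient.mk_smul, proj_mk h, proj_mk h, Submodule.Quotient.mk_smul]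
  · rw [proj, dif_neg h]; simp

/-- image of `m^d` in `R/p`. -/
abbrev mImg (n : ℕ) (d : ℕ) (p : Ideal (R n)) : Submodule ℂ (R n ⧸ p) :=
  Submodule.map (Ideal.Quotient.mkₐ ℂ p).toLinearMap ((mId n ^ d).restrictScalars ℂ)

lemma mem_mImg_iff {n d : ℕ} {p : Ideal (R n)} {x : R n ⧸ p} :
    x ∈ mImg n d p ↔ ∃ a ∈ mId n ^ d, Submodule.Quotient.mk a = x := by
  constructor
  · rintro ⟨a, ha, rfl⟩; exact ⟨a, ha, rfl⟩
  · rintro ⟨a, ha, rfl⟩; exact ⟨a, ha, rfl⟩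

lemma proj_mem_mImg {n d : ℕ} {p q : Ideal (R n)} (h : p ≤ q) {x : R n ⧸ p}
    (hx : x ∈ mImg n d p) : proj p q x ∈ mImg n d q := by
  obtain ⟨a, ha, rfl⟩ := mem_mImg_iff.1 hx
  exact mem_mImg_iff.2 ⟨a, ha, (proj_mk h a).symm⟩

lemma mem_mImg_transfer {n d : ℕ} {p q : Ideal (R n)} (h : p = q) {x : R n ⧸ p}
    (hx : proj p q x ∈ mImg n d q) : x ∈ mImg n d p := by
  subst h; rwa [proj_id] at hx

lemma mem_mImg_eq_zero {n d : ℕ} {p : Ideal (R n)} (h : mId n ^ d ≤ p) {x : R n ⧸ p}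
    (hx : x ∈ mImg n d p) : x = 0 := by
  obtain ⟨a, ha, rfl⟩ := mem_mImg_iff.1 hx
  exact (Submodule.Quotient.mk_eq_zero _).2 (h ha)

variable {n : ℕ}

/-- The map `P/(P ∩ K) → R/K`. -/
def qq (K P : Ideal (R n)) : (↥P ⧸ Submodule.comap P.subtype K) →ₗ[R n] R n ⧸ K :=
  Submodule.liftQ _ ((Submodule.mkQ (K : Submodule (R n) (R n))) ∘ₗ P.subtype) (by
    intro x hx
    simp only [Submodule.mem_comap] at hx
    simp only [LinearMap.mem_ker, LinearMap.comp_apply, Submodule.subtype_apply,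
      Submodule.mkQ_apply, Submodule.Quotient.mk_eq_zero]
    exact hx)

lemma qq_mk {K P : Ideal (R n)} (f : ↥P) :
    qq K P (Submodule.Quotient.mk f) = Submodule.Quotient.mk (f : R n) := rfl

lemma qq_inj (K P : Ideal (R n)) : Function.Injective (qq K P) := by
  intro a b hab
  rw [← sub_eq_zero] at hab ⊢
  rw [← map_sub] at hab
  obtain ⟨v, hv⟩ := Submodule.Quotient.mk_surjective _ (a - b)
  rw [← hv, qq_mk, Submodule.Quotient.mk_eq_zero] at hab
  rw [← hv, Submodule.Quotient.mk_eq_zero]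
  exact hab

lemma qq_csmul {K P : Ideal (R n)} (c : ℂ) (y : ↥P ⧸ Submodule.comap P.subtype K) :
    qq K P (c • y) = c • qq K P y := by
  obtain ⟨v, rfl⟩ := Submodule.Quotient.mk_surjective _ y
  rw [← Submodule.Quotient.mk_smul, qq_mk, qq_mk, ← Submodule.Quotient.mk_smul]
  rfl

lemma range_qq {K P : Ideal (R n)} (h : K ≤ P) :
    LinearMap.range (qq K P) = LinearMap.ker (proj K P) := by
  ext x
  constructor
  · rintro ⟨y, rfl⟩
    obtain ⟨v, rfl⟩ := Submodule.Quotient.mk_surjective _ y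
    rw [LinearMap.mem_ker, qq_mk, proj_mk h, Submodule.Quotient.mk_eq_zero]
    exact v.2
  · intro hx
    obtain ⟨a, rfl⟩ := Submodule.Quotient.mk_surjective _ x
    rw [LinearMap.mem_ker, proj_mk h, Submodule.Quotient.mk_eq_zero] at hx
    exact ⟨Submodule.Quotient.mk ⟨a, hx⟩, rfl⟩

variable {r : ℕ} (k : ℕ) (I : Fin r → Ideal (R n)) (j : Fin r)

/-- The inserted nesting. -/
def Jn : Fin (r + 1) → Ideal (R n) := Fin.insertNth j.succ (mId n ^ k) I

lemma Jn_same : Jn k I j j.succ = mId n ^ k := Fin.insertNth_apply_same _ _ _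

lemma Jn_sA (i : Fin r) : Jn k I j (j.succ.succAbove i) = I i :=
  Fin.insertNth_apply_succAbove _ _ _ _

/-- The restriction of a tangent tuple of the inserted nesting to the original one. -/
def rhoF (Φ : TanCar n (r + 1) (Jn k I j)) : TanCar n r I := fun i =>
  proj (Jn k I j (j.succ.succAbove i)) (I i) ∘ₗ Φ (j.succ.succAbove i) ∘ₗ
    Submodule.inclusion (le_of_eq (Jn_sA k I j i).symm)

lemma rhoF_apply (Φ : TanCar n (r + 1) (Jn k I j)) (i : Fin r) (f : R n) (hf : f ∈ I i)
    (hf' : f ∈ Jn k I j (j.succ.succAbove i)) :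
    rhoF k I j Φ i ⟨f, hf⟩ =
      proj (Jn k I j (j.succ.succAbove i)) (I i) (Φ (j.succ.succAbove i) ⟨f, hf'⟩) := rfl

variable (h : (↥(mId n ^ k) ⧸ Submodule.comap (mId n ^ k).subtype (Inext I j)) →ₗ[R n]
    (↥(I j) ⧸ Submodule.comap (I j).subtype (mId n ^ k)))

/-- The tangent tuple of the inserted nesting associated to a homomorphism
`m^k/I^{(j+1)} → I^{(j)}/m^k` : the given homomorphism at the inserted slot, `0` elsewhere. -/
def insTup : TanCar n (r + 1) (Jn k I j) := fun idx =>
  if hEq : idx = j.succ then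
    proj (mId n ^ k) (Jn k I j idx) ∘ₗ qq (mId n ^ k) (I j) ∘ₗ h ∘ₗ
      Submodule.mkQ _ ∘ₗ Submodule.inclusion (le_of_eq (by rw [hEq]; exact Jn_same k I j))
  else 0

lemma insTup_other {idx : Fin (r + 1)} (hne : idx ≠ j.succ) : insTup k I j h idx = 0 :=
  dif_neg hne

lemma insTup_same_apply (f : R n) (hf : f ∈ Jn k I j j.succ) (hfk : f ∈ mId n ^ k) :
    insTup k I j h j.succ ⟨f, hf⟩ =
      proj (mId n ^ k) (Jn k I j j.succ)
        (qq (mId n ^ k) (I j) (h (Submodule.Quotient.mk ⟨f, hfk⟩))) := by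
  rw [insTup, dif_pos rfl]; rfl

end SandwichAux

set_option maxHeartbeats 8000000 in
/-- Let `(I^{(1)}, …, I^{(r)})` be a nesting of `m`-primary ideals of `R`
contained in `m` having trivial negative tangents (TNT).  Suppose `1 ≤ j ≤ r` and `k ≥ 1`
satisfy `I^{(j)} ⊋ m^k ⊋ I^{(j+1)}` (with `I^{(r+1)} = 0` by convention), and let `p` be the
`(r+1)`-nesting obtained by inserting `m^k` after position `j`.  Then
`T^{<0}(p) ≅ T^{<0}(I^{(1)}, …, I^{(r)}) ⊕ Hom_R(m^k/I^{(j+1)}, I^{(j)}/m^k)` as ℂ-vector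
spaces. -/
theorem negative_tangents_of_sandwich (n r k : ℕ) (hk : 1 ≤ k)
    (I : Fin r → Ideal (R n))
    (hnest : ∀ i i' : Fin r, i ≤ i' → I i' ≤ I i)
    (hprimary : ∀ i : Fin r, ∃ N : ℕ, 1 ≤ N ∧ mId n ^ N ≤ I i)
    (hinm : ∀ i : Fin r, I i ≤ mId n)
    (j : Fin r)
    (hjk : mId n ^ k < I j)
    (hkj : Inext I j < mId n ^ k)
    (hTNT : ∀ t : nestTneg I, ∃ (c : Fin n → ℂ)
      (hmem : (fun i => ∑ l : Fin n, c l • derivT (I i) l) ∈ nestT I),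
      Submodule.Quotient.mk (⟨_, hmem⟩ : ↥(nestT I)) = t) :
    Nonempty (nestTneg (Fin.insertNth j.succ (mId n ^ k) I) ≃ₗ[ℂ]
      (nestTneg I ×
        ((↥(mId n ^ k) ⧸ Submodule.comap (mId n ^ k).subtype (Inext I j)) →ₗ[R n]
          (↥(I j) ⧸ Submodule.comap (I j).subtype (mId n ^ k))))) := by
  classical
  have hjr : (j : ℕ) < r := j.isLt
  -- value computations for `succAbove`
  have hsA : ∀ i : Fin r, ((j.succ.succAbove i : Fin (r + 1)) : ℕ)
      = if (i : ℕ) < (j : ℕ) + 1 then (i : ℕ) else (i : ℕ) + 1 := by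
    intro i
    by_cases hc : (i : ℕ) < (j : ℕ) + 1
    · rw [if_pos hc, Fin.succAbove_of_castSucc_lt]
      · rfl
      · rw [Fin.lt_def]; simpa using hc
    · rw [if_neg hc, Fin.succAbove_of_le_castSucc]
      · rfl
      · rw [Fin.le_def]; simp; omega
  have hJval : ∀ (idx : Fin (r + 1)) (i : Fin r),
      (idx : ℕ) = ((j.succ.succAbove i : Fin (r + 1)) : ℕ) → Jn k I j idx = I i := by
    intro idx i hidx
    have : idx = j.succ.succAbove i := Fin.ext hidx
    rw [this]; exact Jn_sA k I j i
  have hJlow : ∀ (idx : Fin (r + 1)) (hlt : (idx : ℕ) < (j : ℕ) + 1),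
      Jn k I j idx = I ⟨(idx : ℕ), by omega⟩ := by
    intro idx hlt
    exact hJval idx ⟨(idx : ℕ), by omega⟩ (by rw [hsA, if_pos hlt])
  have hJhigh : ∀ (idx : Fin (r + 1)) (hgt : (j : ℕ) + 1 < (idx : ℕ)),
      Jn k I j idx = I ⟨(idx : ℕ) - 1, by have := idx.isLt; omega⟩ := by
    intro idx hgt
    have hidxlt := idx.isLt
    exact hJval idx ⟨(idx : ℕ) - 1, by omega⟩ (by rw [hsA, if_neg (by simp; omega)]; simp; omega)
  have hJsv : ((j.succ : Fin (r + 1)) : ℕ) = (j : ℕ) + 1 := rfl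
  have hInext : ∀ hr' : (j : ℕ) + 1 < r, Inext I j = I ⟨(j : ℕ) + 1, hr'⟩ := by
    intro hr'; rw [Inext, dif_pos hr']
  -- consecutive monotonicity of the inserted nesting
  have Jstep : ∀ ii jj : Fin (r + 1), (jj : ℕ) = (ii : ℕ) + 1 → Jn k I j jj ≤ Jn k I j ii := by
    intro ii jj hij
    have hjjlt := jj.isLt
    have hiilt := ii.isLt
    rcases lt_trichotomy ((jj : ℕ)) ((j : ℕ) + 1) with hc | hc | hc
    · rw [hJlow jj hc, hJlow ii (by omega)]
      exact hnest _ _ (by rw [Fin.le_def]; simp; omega)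
    · have hjj : jj = j.succ := Fin.ext (by rw [hc, hJsv])
      rw [hjj, Jn_same k I j, hJlow ii (by omega)]
      have he : I ⟨(ii : ℕ), by omega⟩ = I j := by congr 1; exact Fin.ext (by simp; omega)
      rw [he]; exact hjk.le
    · rw [hJhigh jj hc]
      by_cases hc2 : (ii : ℕ) = (j : ℕ) + 1
      · have hii : ii = j.succ := Fin.ext (by rw [hc2, hJsv])
        rw [hii, Jn_same k I j]
        have hr' : (j : ℕ) + 1 < r := by omega
        have he : I ⟨(jj : ℕ) - 1, by omega⟩ = Inext I j := by
          rw [hInext hr']; congr 1; exact Fin.ext (by simp; omega)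
        rw [he]; exact hkj.le
      · rw [hJhigh ii (by omega)]
        exact hnest _ _ (by rw [Fin.le_def]; simp; omega)
  have hfJ_of : ∀ (i : Fin r) (f : R n), f ∈ I i → f ∈ Jn k I j (j.succ.succAbove i) := by
    intro i f hf; rw [Jn_sA]; exact hf
  -- restriction preserves the tangent space
  have memT : ∀ Φ : TanCar n (r + 1) (Jn k I j), Φ ∈ nestT (Jn k I j) →
      rhoF k I j Φ ∈ nestT I := by
    intro Φ hΦ
    rw [mem_nestT_iff] at hΦ ⊢
    intro i i' hii' f hfi hfi'
    have hle : I i' ≤ I i := hnest i i' (by rw [Fin.le_def]; omega)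
    rw [rhoF_apply k I j Φ i f hfi (hfJ_of i f hfi),
        rhoF_apply k I j Φ i' f hfi' (hfJ_of i' f hfi'),
        proj_comp (le_of_eq (Jn_sA k I j i')) hle]
    have hav := hsA i
    have hbv := hsA i'
    by_cases hc : (i' : ℕ) < (j : ℕ) + 1
    · have hab : ((j.succ.succAbove i' : Fin (r + 1)) : ℕ)
          = ((j.succ.succAbove i : Fin (r + 1)) : ℕ) + 1 := by
        rw [hav, hbv, if_pos hc, if_pos (by omega)]; omega
      rw [hΦ _ _ hab f (hfJ_of i f hfi) (hfJ_of i' f hfi'),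
          proj_comp (Jstep _ _ hab) (le_of_eq (Jn_sA k I j i))]
    · by_cases hc2 : (i : ℕ) < (j : ℕ) + 1
      · have hmid1 : ((j.succ : Fin (r + 1)) : ℕ)
            = ((j.succ.succAbove i : Fin (r + 1)) : ℕ) + 1 := by
          rw [hav, if_pos hc2, hJsv]; omega
        have hmid2 : ((j.succ.succAbove i' : Fin (r + 1)) : ℕ)
            = ((j.succ : Fin (r + 1)) : ℕ) + 1 := by
          rw [hbv, if_neg hc, hJsv]; omega
        have hfm : f ∈ Jn k I j j.succ := by
          rw [Jn_same k I j]
          have hr' : (j : ℕ) + 1 < r := by have := i'.isLt; omega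
          have he : I i' = Inext I j := by
            rw [hInext hr']; congr 1; exact Fin.ext (by simp; omega)
          exact hkj.le (he ▸ hfi')
        rw [hΦ _ _ hmid1 f (hfJ_of i f hfi) hfm,
            proj_comp (Jstep _ _ hmid1) (le_of_eq (Jn_sA k I j i)),
            hΦ _ _ hmid2 f hfm (hfJ_of i' f hfi'),
            proj_comp (Jstep _ _ hmid2) ((Jstep _ _ hmid1).trans (le_of_eq (Jn_sA k I j i)))]
      · have hab : ((j.succ.succAbove i' : Fin (r + 1)) : ℕ)
            = ((j.succ.succAbove i : Fin (r + 1)) : ℕ) + 1 := by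
          rw [hav, hbv, if_neg hc2, if_neg hc]; omega
        rw [hΦ _ _ hab f (hfJ_of i f hfi) (hfJ_of i' f hfi'),
            proj_comp (Jstep _ _ hab) (le_of_eq (Jn_sA k I j i))]
  -- restriction preserves the nonnegative part
  have memTnn : ∀ Φ : TanCar n (r + 1) (Jn k I j), Φ ∈ nestTnn (Jn k I j) →
      rhoF k I j Φ ∈ nestTnn I := by
    intro Φ hΦ
    rw [mem_nestTnn_iff] at hΦ ⊢
    intro i d f hfi hfm
    rw [rhoF_apply k I j Φ i f hfi (hfJ_of i f hfi)]
    exact proj_mem_mImg (le_of_eq (Jn_sA k I j i)) (hΦ _ d f (hfJ_of i f hfi) hfm)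
  -- the restriction as a linear map on tangent spaces
  let map1 : ↥(nestT (Jn k I j)) →ₗ[ℂ] ↥(nestT I) :=
  { toFun := fun Φ => ⟨rhoF k I j Φ.1, memT Φ.1 Φ.2⟩
    map_add' := by
      intro a b
      apply Subtype.ext; funext i; apply LinearMap.ext; rintro ⟨f, hf⟩
      show rhoF k I j (a.1 + b.1) i ⟨f, hf⟩
        = rhoF k I j a.1 i ⟨f, hf⟩ + rhoF k I j b.1 i ⟨f, hf⟩
      rw [rhoF_apply k I j _ i f hf (hfJ_of i f hf),
          rhoF_apply k I j a.1 i f hf (hfJ_of i f hf),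
          rhoF_apply k I j b.1 i f hf (hfJ_of i f hf),
          Pi.add_apply, LinearMap.add_apply, map_add]
    map_smul' := by
      intro c a
      apply Subtype.ext; funext i; apply LinearMap.ext; rintro ⟨f, hf⟩
      show rhoF k I j (c • a.1) i ⟨f, hf⟩ = c • rhoF k I j a.1 i ⟨f, hf⟩
      rw [rhoF_apply k I j _ i f hf (hfJ_of i f hf),
          rhoF_apply k I j a.1 i f hf (hfJ_of i f hf),
          Pi.smul_apply, LinearMap.smul_apply, proj_csmul] }
  have hcond : Submodule.comap (nestT (Jn k I j)).subtype (nestTnn (Jn k I j)) ≤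
      LinearMap.ker ((Submodule.mkQ (Submodule.comap (nestT I).subtype (nestTnn I))) ∘ₗ map1) := by
    intro Φ hΦ
    rw [LinearMap.mem_ker, LinearMap.comp_apply, Submodule.mkQ_apply,
      Submodule.Quotient.mk_eq_zero]
    exact Submodule.mem_comap.2 (memTnn Φ.1 hΦ)
  let rhobar : nestTneg (Jn k I j) →ₗ[ℂ] nestTneg I := Submodule.liftQ _ _ hcond
  have rhobar_mk : ∀ Φ : ↥(nestT (Jn k I j)),
      rhobar (Submodule.Quotient.mk Φ) = Submodule.Quotient.mk (map1 Φ) := by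
    intro Φ; rfl
  -- surjectivity via TNT
  have hsurj : Function.Surjective rhobar := by
    intro t
    obtain ⟨c, hmemI, hrep⟩ := hTNT t
    have hmemJ : (fun idx => ∑ l : Fin n, c l • derivT (Jn k I j idx) l)
        ∈ nestT (Jn k I j) := by
      rw [mem_nestT_iff]
      intro ii jj hij f hfi hfj
      have hle := Jstep ii jj hij
      show (∑ l : Fin n, c l • derivT (Jn k I j ii) l) ⟨f, hfi⟩
        = proj (Jn k I j jj) (Jn k I j ii)
            ((∑ l : Fin n, c l • derivT (Jn k I j jj) l) ⟨f, hfj⟩)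
      rw [LinearMap.sum_apply, LinearMap.sum_apply, map_sum]
      refine Finset.sum_congr rfl (fun l _ => ?_)
      rw [LinearMap.smul_apply, LinearMap.smul_apply, proj_csmul]
      congr 1
      show (Submodule.Quotient.mk (pderiv l f) : R n ⧸ Jn k I j ii)
        = proj (Jn k I j jj) (Jn k I j ii) (Submodule.Quotient.mk (pderiv l f))
      rw [proj_mk hle]
    refine ⟨Submodule.Quotient.mk ⟨_, hmemJ⟩, ?_⟩
    rw [rhobar_mk, ← hrep]
    congr 1
    apply Subtype.ext; funext i; apply LinearMap.ext; rintro ⟨f, hf⟩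
    show rhoF k I j _ i ⟨f, hf⟩ = (∑ l : Fin n, c l • derivT (I i) l) ⟨f, hf⟩
    rw [rhoF_apply k I j _ i f hf (hfJ_of i f hf)]
    show proj (Jn k I j (j.succ.succAbove i)) (I i)
        ((∑ l : Fin n, c l • derivT (Jn k I j (j.succ.succAbove i)) l) ⟨f, hfJ_of i f hf⟩)
      = (∑ l : Fin n, c l • derivT (I i) l) ⟨f, hf⟩
    rw [LinearMap.sum_apply, LinearMap.sum_apply, map_sum]
    refine Finset.sum_congr rfl (fun l _ => ?_)
    rw [LinearMap.smul_apply, LinearMap.smul_apply, proj_csmul]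
    congr 1
    show proj (Jn k I j (j.succ.succAbove i)) (I i) (Submodule.Quotient.mk (pderiv l f))
      = (Submodule.Quotient.mk (pderiv l f) : R n ⧸ I i)
    rw [proj_mk (le_of_eq (Jn_sA k I j i))]
  -- basic inclusions
  have hmk_le : mId n ^ k ≤ Jn k I j j.succ := le_of_eq (Jn_same k I j).symm
  have hle_mk : Jn k I j j.succ ≤ mId n ^ k := le_of_eq (Jn_same k I j)
  have hmkIj : mId n ^ k ≤ I j := hjk.le
  -- the tuple `insTup h` is a tangent vector
  have hTmem : ∀ h, insTup k I j h ∈ nestT (Jn k I j) := by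
    intro h
    rw [mem_nestT_iff]
    intro ii jj hij f hfi hfj
    by_cases h1 : ii = j.succ
    · subst h1
      have h2 : jj ≠ j.succ := by intro hEq; rw [hEq] at hij; omega
      rw [insTup_other k I j h h2]
      have hfk : f ∈ mId n ^ k := hle_mk hfi
      rw [insTup_same_apply k I j h f hfi hfk]
      have hjjlt := jj.isLt
      have hr' : (j : ℕ) + 1 < r := by rw [hJsv] at hij; omega
      have hfnext : f ∈ Inext I j := by
        rw [hInext hr']
        have he : Jn k I j jj = I ⟨(j : ℕ) + 1, hr'⟩ := by
          rw [hJhigh jj (by rw [hJsv] at hij; omega)]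
          congr 1; exact Fin.ext (by simp; rw [hJsv] at hij; omega)
        rw [← he]; exact hfj
      have hz : (Submodule.Quotient.mk (⟨f, hfk⟩ : ↥(mId n ^ k)) :
          ↥(mId n ^ k) ⧸ Submodule.comap (mId n ^ k).subtype (Inext I j)) = 0 :=
        (Submodule.Quotient.mk_eq_zero _).2 hfnext
      rw [hz, map_zero, map_zero, map_zero, LinearMap.zero_apply, map_zero]
    · by_cases h2 : jj = j.succ
      · subst h2
        rw [insTup_other k I j h h1, LinearMap.zero_apply]
        have hfk : f ∈ mId n ^ k := hle_mk hfj
        rw [insTup_same_apply k I j h f hfj hfk,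
          proj_comp hmk_le (Jstep ii j.succ hij)]
        have hIi : Jn k I j ii = I j := by
          rw [hJsv] at hij
          rw [hJlow ii (by omega)]
          congr 1; exact Fin.ext (by simp; omega)
        obtain ⟨v, hv⟩ := Submodule.Quotient.mk_surjective _
          (h (Submodule.Quotient.mk ⟨f, hfk⟩))
        rw [← hv, qq_mk, proj_mk (hmkIj.trans (le_of_eq hIi.symm))]
        exact ((Submodule.Quotient.mk_eq_zero _).2 (by rw [hIi]; exact v.2)).symm
      · rw [insTup_other k I j h h1, insTup_other k I j h h2, LinearMap.zero_apply,
          LinearMap.zero_apply, map_zero]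
  -- restriction of `insTup h` vanishes
  have hrho0 : ∀ h, rhoF k I j (insTup k I j h) = 0 := by
    intro h; funext i; apply LinearMap.ext; rintro ⟨f, hf⟩
    rw [rhoF_apply k I j _ i f hf (hfJ_of i f hf),
      insTup_other k I j h (Fin.succAbove_ne j.succ i), LinearMap.zero_apply, map_zero]
    rfl
  -- the injection of the Hom space into tangent tuples
  let β : ((↥(mId n ^ k) ⧸ Submodule.comap (mId n ^ k).subtype (Inext I j)) →ₗ[R n]
      (↥(I j) ⧸ Submodule.comap (I j).subtype (mId n ^ k))) →ₗ[ℂ] ↥(nestT (Jn k I j)) :=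
  { toFun := fun h => ⟨insTup k I j h, hTmem h⟩
    map_add' := by
      intro a b
      apply Subtype.ext
      show insTup k I j (a + b) = insTup k I j a + insTup k I j b
      funext idx; apply LinearMap.ext; rintro ⟨f, hf⟩
      rw [Pi.add_apply, LinearMap.add_apply]
      by_cases hEq : idx = j.succ
      · subst hEq
        have hfk : f ∈ mId n ^ k := hle_mk hf
        rw [insTup_same_apply k I j (a + b) f hf hfk, insTup_same_apply k I j a f hf hfk,
          insTup_same_apply k I j b f hf hfk, LinearMap.add_apply, map_add, map_add]
      · rw [insTup_other k I j _ hEq, insTup_other k I j _ hEq, insTup_other k I j _ hEq]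
        simp
    map_smul' := by
      intro c a
      apply Subtype.ext
      show insTup k I j (c • a) = c • insTup k I j a
      funext idx; apply LinearMap.ext; rintro ⟨f, hf⟩
      rw [Pi.smul_apply, LinearMap.smul_apply]
      by_cases hEq : idx = j.succ
      · subst hEq
        have hfk : f ∈ mId n ^ k := hle_mk hf
        rw [insTup_same_apply k I j (c • a) f hf hfk, insTup_same_apply k I j a f hf hfk,
          LinearMap.smul_apply, qq_csmul, proj_csmul]
      · rw [insTup_other k I j _ hEq, insTup_other k I j _ hEq]
        simp }
  have hβval : ∀ h, (β h : TanCar n (r + 1) (Jn k I j)) = insTup k I j h := fun _ => rfl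
  -- β lands in the kernel of rhobar
  let βk : ((↥(mId n ^ k) ⧸ Submodule.comap (mId n ^ k).subtype (Inext I j)) →ₗ[R n]
      (↥(I j) ⧸ Submodule.comap (I j).subtype (mId n ^ k))) →ₗ[ℂ] ↥(LinearMap.ker rhobar) :=
    LinearMap.codRestrict _ ((Submodule.mkQ _) ∘ₗ β) (by
      intro h
      rw [LinearMap.mem_ker, LinearMap.comp_apply, Submodule.mkQ_apply, rhobar_mk]
      have hz : map1 (β h) = 0 := by
        apply Subtype.ext
        show rhoF k I j (β h : TanCar n (r + 1) (Jn k I j)) = 0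
        rw [hβval]; exact hrho0 h
      rw [hz, Submodule.Quotient.mk_zero])
  have hβk_val : ∀ h, (βk h : nestTneg (Jn k I j)) = Submodule.Quotient.mk (β h) :=
    fun _ => rfl
  -- injectivity of βk
  have hβinj : Function.Injective βk := by
    intro a b hab
    rw [← sub_eq_zero]
    have h0 : βk (a - b) = 0 := by rw [map_sub, hab, sub_self]
    have hv : (Submodule.Quotient.mk (β (a - b)) : nestTneg (Jn k I j)) = 0 := by
      rw [← hβk_val, h0]; rfl
    rw [Submodule.Quotient.mk_eq_zero] at hv
    have hnn : insTup k I j (a - b) ∈ nestTnn (Jn k I j) := Submodule.mem_comap.1 hv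
    apply LinearMap.ext; intro y
    rw [LinearMap.zero_apply]
    obtain ⟨v, rfl⟩ := Submodule.Quotient.mk_surjective _ y
    obtain ⟨f, hfk⟩ := v
    have hfJ : f ∈ Jn k I j j.succ := hmk_le hfk
    have hmem := mem_nestTnn_iff.1 hnn j.succ k f hfJ hfk
    rw [insTup_same_apply k I j (a - b) f hfJ hfk] at hmem
    have h0' := mem_mImg_eq_zero hmk_le hmem
    have h1' : qq (mId n ^ k) (I j) ((a - b) (Submodule.Quotient.mk ⟨f, hfk⟩)) = 0 := by
      have h2' := congrArg (proj (Jn k I j j.succ) (mId n ^ k)) h0'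
      rwa [proj_comp hmk_le hle_mk, proj_id, map_zero] at h2'
    exact qq_inj _ _ (by rw [h1', map_zero])
  -- surjectivity of βk
  have hβsurj : Function.Surjective βk := by
    rintro ⟨t, ht⟩
    obtain ⟨Φs, hΦs⟩ := Submodule.Quotient.mk_surjective _ t
    rw [LinearMap.mem_ker, ← hΦs, rhobar_mk] at ht
    have hnn : rhoF k I j Φs.1 ∈ nestTnn I :=
      Submodule.mem_comap.1 ((Submodule.Quotient.mk_eq_zero _).1 ht)
    have hΦ := mem_nestT_iff.1 Φs.2
    -- the homomorphism at the inserted slot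
    set ψ : ↥(mId n ^ k) →ₗ[R n] R n ⧸ (mId n ^ k) :=
      proj (Jn k I j j.succ) (mId n ^ k) ∘ₗ Φs.1 j.succ ∘ₗ Submodule.inclusion hmk_le with hψ
    have ψ_apply : ∀ (f : R n) (hfk : f ∈ mId n ^ k), ψ ⟨f, hfk⟩ =
        proj (Jn k I j j.succ) (mId n ^ k) (Φs.1 j.succ ⟨f, hmk_le hfk⟩) := fun _ _ => rfl
    have hψmem : ∀ v : ↥(mId n ^ k), ψ v ∈ LinearMap.range (qq (mId n ^ k) (I j)) := by
      rintro ⟨f, hfk⟩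
      rw [range_qq hmkIj, LinearMap.mem_ker, ψ_apply f hfk, proj_comp hle_mk hmkIj]
      have hfIj : f ∈ I j := hmkIj hfk
      have hfa : f ∈ Jn k I j (j.succ.succAbove j) := hfJ_of j f hfIj
      have hstep : ((j.succ : Fin (r + 1)) : ℕ)
          = ((j.succ.succAbove j : Fin (r + 1)) : ℕ) + 1 := by
        rw [hsA j, if_pos (by omega), hJsv]
      have hcompat := hΦ _ _ hstep f hfa (hmk_le hfk)
      have hval := mem_nestTnn_iff.1 hnn j k f hfIj hfk
      rw [rhoF_apply k I j Φs.1 j f hfIj hfa] at hval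
      have hz := mem_mImg_eq_zero hmkIj hval
      rw [hcompat, proj_comp (Jstep _ _ hstep) (le_of_eq (Jn_sA k I j j))] at hz
      exact hz
    let e2 := LinearEquiv.ofInjective (qq (mId n ^ k) (I j)) (qq_inj _ _)
    let g : ↥(mId n ^ k) →ₗ[R n] (↥(I j) ⧸ Submodule.comap (I j).subtype (mId n ^ k)) :=
      (e2.symm : ↥(LinearMap.range (qq (mId n ^ k) (I j))) →ₗ[R n] _) ∘ₗ
        LinearMap.codRestrict _ ψ hψmem
    have hg : ∀ v, qq (mId n ^ k) (I j) (g v) = ψ v := by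
      intro v
      show qq (mId n ^ k) (I j) (e2.symm ⟨ψ v, hψmem v⟩) = ψ v
      calc qq (mId n ^ k) (I j) (e2.symm ⟨ψ v, hψmem v⟩)
          = ↑(e2 (e2.symm ⟨ψ v, hψmem v⟩)) :=
            (LinearEquiv.ofInjective_apply _ _).symm
        _ = ψ v := by rw [e2.apply_symm_apply]
    have hgkill : Submodule.comap (mId n ^ k).subtype (Inext I j) ≤ LinearMap.ker g := by
      rintro ⟨f, hfk⟩ hv
      rw [LinearMap.mem_ker]
      apply qq_inj
      rw [hg, map_zero]
      have hfnext : f ∈ Inext I j := hv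
      by_cases hr' : (j : ℕ) + 1 < r
      · have hfi' : f ∈ I ⟨(j : ℕ) + 1, hr'⟩ := by rw [← hInext hr']; exact hfnext
        have hb : ((j.succ.succAbove ⟨(j : ℕ) + 1, hr'⟩ : Fin (r + 1)) : ℕ)
            = ((j.succ : Fin (r + 1)) : ℕ) + 1 := by
          rw [hsA _, if_neg (by simp), hJsv]
        have hcompat := hΦ _ _ hb f (hmk_le hfk) (hfJ_of _ f hfi')
        have hval := mem_nestTnn_iff.1 hnn ⟨(j : ℕ) + 1, hr'⟩ k f hfi' hfk
        rw [rhoF_apply k I j Φs.1 _ f hfi' (hfJ_of _ f hfi')] at hval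
        have hval2 := mem_mImg_transfer (Jn_sA k I j ⟨(j : ℕ) + 1, hr'⟩) hval
        obtain ⟨a0, ha0, ha0e⟩ := mem_mImg_iff.1 hval2
        rw [ψ_apply f hfk, hcompat, ← ha0e, proj_mk (Jstep _ _ hb), proj_mk hle_mk]
        exact (Submodule.Quotient.mk_eq_zero _).2 ha0
      · have hf0 : f = 0 := by rw [Inext, dif_neg hr'] at hfnext; simpa using hfnext
        have hv0 : (⟨f, hfk⟩ : ↥(mId n ^ k)) = 0 := Subtype.ext hf0
        rw [hv0, map_zero]
    let hh := Submodule.liftQ (Submodule.comap (mId n ^ k).subtype (Inext I j)) g hgkill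
    have hh_mk : ∀ v, hh (Submodule.Quotient.mk v) = g v := fun v => rfl
    have hsame : insTup k I j hh j.succ = Φs.1 j.succ := by
      apply LinearMap.ext; rintro ⟨f, hfJ⟩
      have hfk : f ∈ mId n ^ k := hle_mk hfJ
      rw [insTup_same_apply k I j hh f hfJ hfk, hh_mk, hg, ψ_apply f hfk,
        proj_comp hle_mk hmk_le, proj_id]
    refine ⟨hh, Subtype.ext ?_⟩
    show (βk hh : nestTneg (Jn k I j)) = t
    rw [hβk_val, ← hΦs, Submodule.Quotient.eq]
    have hmemnn : (β hh : TanCar n (r + 1) (Jn k I j)) - Φs.1 ∈ nestTnn (Jn k I j) := by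
      rw [mem_nestTnn_iff]
      intro idx d f hfidx hfm
      by_cases hEq : idx = j.succ
      · subst hEq
        rw [Pi.sub_apply, LinearMap.sub_apply, hβval, hsame, sub_self]
        exact Submodule.zero_mem _
      · obtain ⟨i, hi⟩ := Fin.exists_succAbove_eq hEq
        subst hi
        rw [Pi.sub_apply, LinearMap.sub_apply, hβval,
          insTup_other k I j hh (Fin.succAbove_ne j.succ i), LinearMap.zero_apply, zero_sub]
        apply Submodule.neg_mem
        have hfi : f ∈ I i := by rw [← Jn_sA k I j i]; exact hfidx
        have hval := mem_nestTnn_iff.1 hnn i d f hfi hfm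
        rw [rhoF_apply k I j Φs.1 i f hfi hfidx] at hval
        exact mem_mImg_transfer (Jn_sA k I j i) hval
    exact Submodule.mem_comap.2 hmemnn
  -- assemble the equivalence
  obtain ⟨Q, hQ⟩ := Submodule.exists_isCompl (LinearMap.ker rhobar)
  have e1 : (↥(LinearMap.ker rhobar) × ↥Q) ≃ₗ[ℂ] nestTneg (Jn k I j) :=
    Submodule.prodEquivOfIsCompl _ Q hQ
  have e2 : ((↥(mId n ^ k) ⧸ Submodule.comap (mId n ^ k).subtype (Inext I j)) →ₗ[R n]
      (↥(I j) ⧸ Submodule.comap (I j).subtype (mId n ^ k))) ≃ₗ[ℂ] ↥(LinearMap.ker rhobar) :=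
    LinearEquiv.ofBijective βk ⟨hβinj, hβsurj⟩
  have e3 : ↥Q ≃ₗ[ℂ] nestTneg I :=
    (Submodule.quotientEquivOfIsCompl _ Q hQ).symm.trans
      (rhobar.quotKerEquivOfSurjective hsurj)
  have e4 : (↥(LinearMap.ker rhobar) × ↥Q) ≃ₗ[ℂ]
      (((↥(mId n ^ k) ⧸ Submodule.comap (mId n ^ k).subtype (Inext I j)) →ₗ[R n]
        (↥(I j) ⧸ Submodule.comap (I j).subtype (mId n ^ k))) × nestTneg I) :=
    LinearEquiv.prodCongr e2.symm e3
  exact ⟨e1.symm.trans (e4.trans (LinearEquiv.prodComm ℂ _ _))⟩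

end
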